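/- Let S, X ∈ Matrix (Fin d) (Fin d) ℝ with S symmetric positive definite and X symmetric. Then S² commutes with X·S + S·X if and only if S commutes with X. (This expresses that a symmetric positive definite matrix M = S² commutes with its derivative M' = X S + S X, where X = (M^{1/2})', if and only if the square root S = M^{1/2} commutes with its derivative X.) -/

import Mathlib

open Matrix

/-- Lyapunov-type lemma: if `S` is positive definite, `B` is antisymmetric and
`S*B + B*S = 0`, then `B = 0`. -/
lemma lyap_aux {d : ℕ} {S B : Matrix (Fin d) (Fin d) ℝ}
    (hS : S.PosDef) (hB : Bᵀ = -B) (h : S * B + B * S = 0) : B = 0 := by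
  have hBS : B * S = -(S * B) := by
    have := h
    linear_combination (norm := noncomm_ring) this
  -- key identity : Bᵀ * S * B = S * (B * B)
  have key : Bᵀ * S * B = S * (B * B) := by
    rw [hB]
    calc (-B) * S * B = -((B * S) * B) := by noncomm_ring
    _ = -((-(S * B)) * B) := by rw [hBS]
    _ = S * (B * B) := by noncomm_ring
  -- trace is zero
  have tr0 : (Bᵀ * S * B).trace = 0 := by
    have h1 : (S * (B * B)).trace = ((S * B) * B).trace := by noncomm_ring
    have h2 : ((S * B) * B).trace = (B * (S * B)).trace := trace_mul_comm _ _
    have h3 : B * (S * B) = -(S * (B * B)) := by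
      calc B * (S * B) = (B * S) * B := by noncomm_ring
      _ = (-(S * B)) * B := by rw [hBS]
      _ = -(S * (B * B)) := by noncomm_ring
    have h5 : (S * (B * B)).trace = -(S * (B * B)).trace :=
      h1.trans (h2.trans (by rw [h3, trace_neg]))
    have h4 : (S * (B * B)).trace = 0 := by linarith
    rw [key, h4]
  -- diagonal entries of Bᵀ * S * B are the quadratic forms on the columns of B
  have hdiag : ∀ j, (Bᵀ * S * B) j j = dotProduct (star fun i => B i j) (S *ᵥ fun i => B i j) := by
    intro j
    simp only [mul_apply, transpose_apply, dotProduct, mulVec, star_trivial, Finset.sum_mul,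
      Finset.mul_sum]
    rw [Finset.sum_comm]
    exact Finset.sum_congr rfl fun i _ => Finset.sum_congr rfl fun k _ => by ring
  have hnonneg : ∀ j, 0 ≤ (Bᵀ * S * B) j j := by
    intro j
    rw [hdiag j]
    exact hS.posSemidef.dotProduct_mulVec_nonneg _
  have hzero : ∀ j ∈ Finset.univ, (Bᵀ * S * B) j j = 0 := by
    have := (Finset.sum_eq_zero_iff_of_nonneg (fun j _ => hnonneg j)).mp tr0
    exact this
  -- each column of B is zero
  ext i j
  by_contra hij
  have hcol : (fun i => B i j) ≠ 0 := by
    intro hc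
    exact hij (by simpa using congrFun hc i)
  have := hS.dotProduct_mulVec_pos hcol
  rw [← hdiag j, hzero j (Finset.mem_univ j)] at this
  exact lt_irrefl 0 this

/-- **Commutation of `M = S²` with `M' = XS + SX` versus commutation of `S` with `X`.**
For `S` symmetric positive definite and `X` symmetric,
`S²` commutes with `X·S + S·X` if and only if `S` commutes with `X`. -/
theorem sq_commute_iff_commute (d : ℕ)
    (S X : Matrix (Fin d) (Fin d) ℝ)
    (hS : S.PosDef) (hS_symm : Sᵀ = S) (hX_symm : Xᵀ = X) :
    Commute (S * S) (X * S + S * X) ↔ Commute S X := by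
  constructor
  · intro h
    have h' : (S * S) * (X * S + S * X) = (X * S + S * X) * (S * S) := h
    set C := S * X - X * S with hC
    have hCt : Cᵀ = -C := by
      simp [hC, transpose_sub, transpose_mul, hS_symm, hX_symm]
    set B := S * C + C * S with hBdef
    have hBt : Bᵀ = -B := by
      simp only [hBdef, transpose_add, transpose_mul, hCt, hS_symm]
      noncomm_ring
    have hSB : S * B + B * S = 0 := by
      have : S * B + B * S = (S * S) * (X * S + S * X) - (X * S + S * X) * (S * S) := by
        simp only [hBdef, hC]
        noncomm_ring
      rw [this, h', sub_self]
    have hB0 : B = 0 := lyap_aux hS hBt hSB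
    have hSC : S * C + C * S = 0 := hB0
    have hC0 : C = 0 := lyap_aux hS hCt hSC
    have : S * X = X * S := by
      have := hC0
      rw [hC] at this
      linear_combination (norm := noncomm_ring) this
    exact this
  · intro h
    have hSSX : Commute (S * S) X := h.mul_left h
    have hSSS : Commute (S * S) S := (Commute.refl S).mul_left (Commute.refl S)
    exact (hSSX.mul_right hSSS).add_right (hSSS.mul_right hSSX)
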